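/- Let q ≥ 2 and suppose X and Y are independent random variables, each uniformly distributed on Z/qZ. If q is even, then for the random variable Z = X·(Y − 3) − 2W₁ − 2W₂ − 4W₃ − 2W₄ where W₁,...,W₄ are additional independent uniform variables on Z/qZ (all mutually independent with X, Y), the distribution of Z satisfies P(Z ≡ 2i) = 3/(2q) and P(Z ≡ 2i+1) = 1/(2q) for each i ∈ {0, 1, ..., q/2 − 1}. -/

import Mathlib

open Finset

lemma P1P3_fiber_parity (q : ℕ) [NeZero q] (heven : 2 ∣ q) (c : ZMod 2) :
    (univ.filter fun x : ZMod q => ZMod.castHom heven (ZMod 2) x = c).card = q / 2 := by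
  set ψ := ZMod.castHom heven (ZMod 2) with hψ
  have hshift : ∀ d : ZMod 2,
      (univ.filter fun x : ZMod q => ψ x = d).card
        = (univ.filter fun x : ZMod q => ψ x = d + 1).card := by
    intro d
    apply Finset.card_nbij' (fun x => x + 1) (fun x => x - 1)
    · intro x hx
      simp only [mem_coe, mem_filter, mem_univ, true_and] at hx ⊢
      rw [map_add, hx, map_one]
    · intro x hx
      simp only [mem_coe, mem_filter, mem_univ, true_and] at hx ⊢
      rw [map_sub, hx, map_one, add_sub_cancel_right]
    · intro x _; ring
    · intro x _; ring
  have hsum : (univ.filter fun x : ZMod q => ψ x = 0).card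
      + (univ.filter fun x : ZMod q => ψ x = 1).card = q := by
    have h1 : ∀ a : ZMod 2, a = 1 ↔ ¬ a = 0 := by decide
    calc (univ.filter fun x : ZMod q => ψ x = 0).card
        + (univ.filter fun x : ZMod q => ψ x = 1).card
        = (univ.filter fun x : ZMod q => ψ x = 0).card
        + (univ.filter fun x : ZMod q => ¬ ψ x = 0).card := by
          congr 1; apply Finset.card_bij (fun x _ => x) <;> simp [h1]
      _ = (univ : Finset (ZMod q)).card :=
          Finset.card_filter_add_card_filter_not _
      _ = q := by simp [ZMod.card]
  have h01 : (univ.filter fun x : ZMod q => ψ x = 0).card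
      = (univ.filter fun x : ZMod q => ψ x = 1).card := by
    simpa using hshift 0
  have hc : c = 0 ∨ c = 1 := by revert c; decide
  rcases hc with rfl | rfl <;> omega

lemma P1P3_solve_two (q : ℕ) [NeZero q] (heven : 2 ∣ q) (hq : 2 ≤ q) (a : ZMod q) :
    (univ.filter fun w : ZMod q => 2 * w = a).card =
      if ZMod.castHom heven (ZMod 2) a = 0 then 2 else 0 := by
  set ψ := ZMod.castHom heven (ZMod 2) with hψ
  have hcast : ∀ w : ZMod q, ((w.val : ℕ) : ZMod q) = w := fun w => by
    rw [ZMod.natCast_val, ZMod.cast_id]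
  obtain ⟨k, hk⟩ := heven
  have hk0 : 0 < k := by omega
  by_cases h : ψ a = 0
  · rw [if_pos h]
    have hval : ψ a = ((a.val : ℕ) : ZMod 2) := by
      rw [hψ, ZMod.castHom_apply, ZMod.cast_eq_val]
    have hdvd : 2 ∣ a.val := by
      rw [hval] at h
      exact (ZMod.natCast_eq_zero_iff _ _).mp h
    obtain ⟨m, hm⟩ := hdvd
    set w0 : ZMod q := ((m : ℕ) : ZMod q) with hw0
    have hsol : 2 * w0 = a := by
      rw [hw0]
      have h2 : ((2 * m : ℕ) : ZMod q) = a := by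
        rw [← hm, hcast]
      push_cast at h2
      linear_combination h2
    have hbij : (univ.filter fun w : ZMod q => 2 * w = a).card
        = (univ.filter fun w : ZMod q => 2 * w = 0).card := by
      apply Finset.card_nbij' (fun w => w - w0) (fun w => w + w0)
      · intro x hx
        simp only [mem_coe, mem_filter, mem_univ, true_and] at hx ⊢
        rw [mul_sub, hx, hsol, sub_self]
      · intro x hx
        simp only [mem_coe, mem_filter, mem_univ, true_and] at hx ⊢
        rw [mul_add, hx, hsol, zero_add]
      · intro x _; ring
      · intro x _; ring
    rw [hbij]
    have hker : (univ.filter fun w : ZMod q => 2 * w = 0) = {0, ((k : ℕ) : ZMod q)} := by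
      ext w
      simp only [mem_filter, mem_univ, true_and, mem_insert, mem_singleton]
      constructor
      · intro hw
        have h0 : ((2 * w.val : ℕ) : ZMod q) = 0 := by
          push_cast
          rw [hcast]
          exact hw
        have hd : q ∣ 2 * w.val := (ZMod.natCast_eq_zero_iff _ _).mp h0
        rcases hd with ⟨c, hc⟩
        have hlt : w.val < 2 * k := by rw [← hk]; exact ZMod.val_lt w
        have hkd : w.val = 0 ∨ w.val = k := by
          rcases Nat.lt_or_ge c 2 with hc2 | hc2
          · interval_cases c <;> omega
          · exfalso; nlinarith [hk0]
        rcases hkd with h' | h'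
        · left
          calc w = ((w.val : ℕ) : ZMod q) := (hcast w).symm
            _ = 0 := by rw [h']; simp
        · right
          rw [← hcast w, h']
      · intro hw
        rcases hw with rfl | rfl
        · ring
        · have h3 : ((2 * k : ℕ) : ZMod q) = 0 := by
            rw [← hk]; exact ZMod.natCast_self q
          push_cast at h3
          linear_combination h3
    rw [hker]
    rw [Finset.card_insert_of_notMem, Finset.card_singleton]
    simp only [mem_singleton]
    intro hcontra
    have hd : q ∣ k := (ZMod.natCast_eq_zero_iff k q).mp hcontra.symm
    have := Nat.le_of_dvd hk0 hd
    omega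
  · rw [if_neg h]
    rw [Finset.card_eq_zero, Finset.filter_eq_empty_iff]
    intro w _ hw
    apply h
    have h2 : ψ (2 * w) = 0 := by
      rw [map_mul]
      have h20 : (ψ 2 : ZMod 2) = 0 := by
        have : ((2:ZMod q)) = ((2:ℕ):ZMod q) := by push_cast; ring
        rw [this, map_natCast]
        decide
      rw [h20, zero_mul]
    rw [← hw]; exact h2

lemma P1P3_sum_comp_parity (q : ℕ) [NeZero q] (heven : 2 ∣ q) (g : ZMod 2 → ℕ) :
    ∑ x : ZMod q, g (ZMod.castHom heven (ZMod 2) x) = (q / 2) * ∑ b : ZMod 2, g b := by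
  set ψ := ZMod.castHom heven (ZMod 2) with hψ
  rw [Finset.sum_comp g ψ]
  rw [Finset.sum_subset (Finset.subset_univ (univ.image ψ))]
  · rw [Finset.mul_sum]
    apply Finset.sum_congr rfl
    intro b _
    rw [P1P3_fiber_parity q heven b, smul_eq_mul]
  · intro b _ hb
    have : (univ.filter fun x : ZMod q => ψ x = b) = ∅ := by
      rw [Finset.filter_eq_empty_iff]
      intro x _ hx
      exact hb (Finset.mem_image.mpr ⟨x, Finset.mem_univ x, hx⟩)
    rw [this]
    simp

lemma P1P3_main_count (q : ℕ) [NeZero q] (hq : 2 ≤ q) (heven : 2 ∣ q) (c : ZMod q) :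
    (Finset.univ.filter
        (fun t : ZMod q × ZMod q × ZMod q × ZMod q × ZMod q × ZMod q =>
          t.1 * (t.2.1 - 3) - 2 * t.2.2.1 - 2 * t.2.2.2.1 - 4 * t.2.2.2.2.1
            - 2 * t.2.2.2.2.2 = c)).card
    = q ^ 3 * ((q / 2) * ((q / 2) *
        (if ZMod.castHom heven (ZMod 2) c = 0 then 6 else 2))) := by
  set ψ := ZMod.castHom heven (ZMod 2) with hψdef
  have hψ2 : ψ (2 : ZMod q) = 0 := by
    have h : ((2:ZMod q)) = ((2:ℕ):ZMod q) := by push_cast; ring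
    rw [h, map_natCast]; decide
  have hψ3 : ψ (3 : ZMod q) = 1 := by
    have h : ((3:ZMod q)) = ((3:ℕ):ZMod q) := by push_cast; ring
    rw [h, map_natCast]; decide
  have hψ4 : ψ (4 : ZMod q) = 0 := by
    have h : ((4:ZMod q)) = ((4:ℕ):ZMod q) := by push_cast; ring
    rw [h, map_natCast]; decide
  have key : ∀ x y w1 w2 w3 : ZMod q,
      (∑ w4 : ZMod q, if x*(y-3) - 2*w1 - 2*w2 - 4*w3 - 2*w4 = c then 1 else 0)
        = if ψ x * (ψ y - 1) = ψ c then 2 else 0 := by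
    intro x y w1 w2 w3
    have h1 : ∀ w4 : ZMod q,
        (x*(y-3) - 2*w1 - 2*w2 - 4*w3 - 2*w4 = c)
          ↔ (2*w4 = x*(y-3) - 2*w1 - 2*w2 - 4*w3 - c) :=
      fun w4 => ⟨fun h => by linear_combination -h, fun h => by linear_combination -h⟩
    simp_rw [h1]
    rw [← Finset.card_filter]
    rw [P1P3_solve_two q heven hq _]
    have h2 : ψ (x*(y-3) - 2*w1 - 2*w2 - 4*w3 - c) = ψ x * (ψ y - 1) - ψ c := by
      rw [map_sub, map_sub, map_sub, map_sub, map_mul, map_mul, map_mul, map_mul,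
        map_sub, hψ2, hψ3, hψ4]
      ring
    rw [h2]
    have h3 : (ψ x * (ψ y - 1) - ψ c = 0) ↔ (ψ x * (ψ y - 1) = ψ c) := sub_eq_zero
    exact if_congr h3 rfl rfl
  rw [Finset.card_filter]
  rw [Fintype.sum_prod_type]
  simp_rw [Fintype.sum_prod_type]
  simp_rw [key]
  simp_rw [Finset.sum_const, Finset.card_univ, ZMod.card, smul_eq_mul]
  simp_rw [← Finset.mul_sum]
  have hy : ∀ x : ZMod q,
      (∑ y : ZMod q, if ψ x * (ψ y - 1) = ψ c then 2 else 0)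
        = (q / 2) * ∑ b : ZMod 2, (if ψ x * (b - 1) = ψ c then 2 else 0) := by
    intro x
    exact P1P3_sum_comp_parity q heven (fun b => if ψ x * (b - 1) = ψ c then 2 else 0)
  simp_rw [hy, ← Finset.mul_sum]
  have hx : (∑ x : ZMod q, ∑ b : ZMod 2, (if ψ x * (b - 1) = ψ c then 2 else 0))
      = (q / 2) * ∑ a : ZMod 2, ∑ b : ZMod 2, (if a * (b - 1) = ψ c then 2 else 0) :=
    P1P3_sum_comp_parity q heven (fun a => ∑ b : ZMod 2, if a * (b - 1) = ψ c then 2 else 0)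
  rw [hx]
  have hfin : ∀ e : ZMod 2,
      (∑ a : ZMod 2, ∑ b : ZMod 2, if a * (b - 1) = e then 2 else 0)
        = if e = 0 then 6 else 2 := by decide
  rw [hfin (ψ c)]
  ring

/-- For even `q ≥ 2` and `X, Y, W₁, W₂, W₃, W₄` mutually independent
uniform on `ℤ/q`, the variable `Z = X(Y-3) - 2W₁ - 2W₂ - 4W₃ - 2W₄` satisfies
`P(Z ≡ 2i) = 3/(2q)` and `P(Z ≡ 2i+1) = 1/(2q)` for each `0 ≤ i < q/2`
(stated by counting the `q^6` equally likely outcomes). -/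
theorem P1P3_distribution (q : ℕ) [NeZero q] (hq : 2 ≤ q) (heven : 2 ∣ q)
    (i : ℕ) (hi : i < q / 2) :
    2 * q * (Finset.univ.filter
        (fun t : ZMod q × ZMod q × ZMod q × ZMod q × ZMod q × ZMod q =>
          t.1 * (t.2.1 - 3) - 2 * t.2.2.1 - 2 * t.2.2.2.1 - 4 * t.2.2.2.2.1
            - 2 * t.2.2.2.2.2 = ((2 * i : ℕ) : ZMod q))).card
        = 3 * q ^ 6 ∧
    2 * q * (Finset.univ.filter
        (fun t : ZMod q × ZMod q × ZMod q × ZMod q × ZMod q × ZMod q =>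
          t.1 * (t.2.1 - 3) - 2 * t.2.2.1 - 2 * t.2.2.2.1 - 4 * t.2.2.2.2.1
            - 2 * t.2.2.2.2.2 = ((2 * i + 1 : ℕ) : ZMod q))).card
        = q ^ 6 := by
  set ψ := ZMod.castHom heven (ZMod 2) with hψdef
  have heq1 : ψ (((2 * i : ℕ) : ZMod q)) = 0 := by
    rw [hψdef, map_natCast]
    push_cast
    rw [show ((2:ZMod 2)) = 0 by decide, zero_mul]
  have heq2 : ψ (((2 * i + 1 : ℕ) : ZMod q)) = 1 := by
    rw [hψdef, map_natCast]
    push_cast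
    rw [show ((2:ZMod 2)) = 0 by decide, zero_mul, zero_add]
  obtain ⟨k, hk⟩ := heven
  have hk2 : q / 2 = k := by omega
  constructor
  · rw [P1P3_main_count q hq ⟨k, hk⟩ _, ← hψdef, heq1, if_pos rfl, hk2]
    subst hk; ring
  · rw [P1P3_main_count q hq ⟨k, hk⟩ _, ← hψdef, heq2, hk2]
    rw [if_neg (by decide : ¬ (1 : ZMod 2) = 0)]
    subst hk; ring
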